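/- For every α ∈ (0,1] there exist a constant c > 0 and N ∈ ℕ such that for all n ≥ N and all f: {0,1}^n → {0,1} with total influence Inf[f] ≥ αn, the alternation complexity satisfies a(f) ≥ c·√n. -/

import Mathlib

/-- Number of alternations of `f` along the chain `X` of `ℓ+1` points:
the number of indices `j` with `f (X j) ≠ f (X (j+1))`. -/
def altCount {n : ℕ} (f : (Fin n → Bool) → Bool) {ℓ : ℕ}
    (X : Fin (ℓ + 1) → (Fin n → Bool)) : ℕ :=
  (Finset.univ.filter (fun j : Fin ℓ => f (X j.castSucc) ≠ f (X j.succ))).card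

/-- `a_f(x)`: the maximum number of alternations of `f` over all
(strictly increasing) chains in `{0,1}^n` starting at `x`. -/
noncomputable def altFrom {n : ℕ} (f : (Fin n → Bool) → Bool) (x : Fin n → Bool) : ℕ :=
  sSup {k | ∃ (ℓ : ℕ) (X : Fin (ℓ + 1) → (Fin n → Bool)),
    StrictMono X ∧ X 0 = x ∧ altCount f X = k}

/-- `a(f)`: the maximum number of alternations of `f` over all
(strictly increasing) chains in `{0,1}^n`. -/
noncomputable def alt {n : ℕ} (f : (Fin n → Bool) → Bool) : ℕ :=
  sSup {k | ∃ (ℓ : ℕ) (X : Fin (ℓ + 1) → (Fin n → Bool)),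
    StrictMono X ∧ altCount f X = k}

/-- `Inf_i[f] = Pr_x[f(x) ≠ f(x^{⊕ i})]`, the influence of coordinate `i` on `f`. -/
noncomputable def influence {n : ℕ} (i : Fin n) (f : (Fin n → Bool) → Bool) : ℝ :=
  ((Finset.univ.filter (fun x : Fin n → Bool =>
      f x ≠ f (Function.update x i (!(x i))))).card : ℝ) / 2 ^ n

/-- `Inf[f] = ∑ i, Inf_i[f]`, the total influence of `f`. -/
noncomputable def totalInfluence {n : ℕ} (f : (Fin n → Bool) → Bool) : ℝ :=
  ∑ i : Fin n, influence i f

namespace Stmt5Aux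

open Finset

variable {n : ℕ}

def wt (x : Fin n → Bool) : ℕ := (Finset.univ.filter (fun i => x i = true)).card

lemma wt_lt_wt {x y : Fin n → Bool} (h : x < y) : wt x < wt y := by
  obtain ⟨hle, a, ha⟩ := Pi.lt_def.mp h
  apply Finset.card_lt_card
  constructor
  · intro i hi
    simp only [mem_filter, mem_univ, true_and] at hi ⊢
    have := hle i
    rw [hi] at this
    exact (Bool.le_iff_imp.mp this) rfl
  · intro hsub
    have ha1 : x a = false := by
      rcases Bool.lt_iff.mp ha with ⟨h1, _⟩; exact h1
    have ha2 : y a = true := (Bool.lt_iff.mp ha).2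
    have : a ∈ Finset.univ.filter (fun i => x i = true) := hsub (by simp [ha2])
    simp [ha1] at this

lemma wt_le (x : Fin n → Bool) : wt x ≤ n := by
  simpa [wt] using Finset.card_filter_le Finset.univ (fun i => x i = true)

lemma strictMono_len {ℓ : ℕ} {X : Fin (ℓ+1) → (Fin n → Bool)} (hX : StrictMono X) :
    ℓ ≤ n := by
  have hg : StrictMono (fun j => wt (X j)) := fun a b hab => wt_lt_wt (hX hab)
  have := Finset.card_le_card_of_injOn (s := (univ : Finset (Fin (ℓ+1))))
    (t := Finset.range (n+1)) (fun j => wt (X j))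
    (fun j _ => by simp [Nat.lt_succ_iff, wt_le]) (hg.injective.injOn)
  simpa using this

lemma altCount_le_n {f : (Fin n → Bool) → Bool} {ℓ : ℕ}
    {X : Fin (ℓ+1) → (Fin n → Bool)} (hX : StrictMono X) : altCount f X ≤ n := by
  calc altCount f X ≤ (univ : Finset (Fin ℓ)).card := Finset.card_filter_le _ _
  _ = ℓ := by simp
  _ ≤ n := strictMono_len hX

lemma bddAlt (f : (Fin n → Bool) → Bool) :
    BddAbove {k | ∃ (ℓ : ℕ) (X : Fin (ℓ + 1) → (Fin n → Bool)),
      StrictMono X ∧ altCount f X = k} :=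
  ⟨n, fun _ ⟨_, _, hX, hk⟩ => hk ▸ altCount_le_n hX⟩

lemma le_alt (f : (Fin n → Bool) → Bool) {ℓ : ℕ} {X : Fin (ℓ+1) → (Fin n → Bool)}
    (hX : StrictMono X) : altCount f X ≤ alt f :=
  le_csSup (bddAlt f) ⟨ℓ, X, hX, rfl⟩


def chainOf (σ : Equiv.Perm (Fin n)) : Fin (n+1) → (Fin n → Bool) :=
  fun j a => decide ((σ.symm a : ℕ) < (j : ℕ))

lemma chainOf_strictMono (σ : Equiv.Perm (Fin n)) : StrictMono (chainOf σ) := by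
  intro j j' h
  rw [Pi.lt_def]
  constructor
  · intro a
    simp only [chainOf, Bool.le_iff_imp, decide_eq_true_eq]
    intro h2
    exact h2.trans h
  · have hj : (j : ℕ) < n := lt_of_lt_of_le h (Nat.lt_succ_iff.mp j'.isLt)
    refine ⟨σ ⟨(j : ℕ), hj⟩, ?_⟩
    rw [Bool.lt_iff]
    constructor
    · simp [chainOf]
    · simp only [chainOf, Equiv.symm_apply_apply, decide_eq_true_eq]
      exact h

lemma card_filter_lt {j : ℕ} (hj : j ≤ n) :
    (univ.filter fun t : Fin n => (t : ℕ) < j).card = j := by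
  have : (univ.filter fun t : Fin n => (t : ℕ) < j) =
      Finset.map ⟨fun a : Fin j => (⟨(a : ℕ), lt_of_lt_of_le a.isLt hj⟩ : Fin n),
        fun a b hab => Fin.ext (by simpa using congrArg Fin.val hab)⟩ univ := by
    ext t
    simp only [mem_filter, mem_univ, true_and, Finset.mem_map, Function.Embedding.coeFn_mk]
    constructor
    · intro ht
      exact ⟨⟨(t : ℕ), ht⟩, Fin.ext rfl⟩
    · rintro ⟨a, -, rfl⟩
      exact a.isLt
  rw [this, Finset.card_map]
  simp

lemma wt_chainOf (σ : Equiv.Perm (Fin n)) (j : Fin (n+1)) :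
    wt (chainOf σ j) = (j : ℕ) := by
  unfold wt chainOf
  conv_rhs => rw [← card_filter_lt (n := n) (Nat.lt_succ_iff.mp j.isLt)]
  apply Finset.card_bij (fun a _ => σ.symm a)
  · intro a ha
    simp only [mem_filter, mem_univ, true_and, decide_eq_true_eq] at ha ⊢
    exact ha
  · intro a _ b _ hab
    exact σ.symm.injective hab
  · intro t ht
    simp only [mem_filter, mem_univ, true_and, decide_eq_true_eq] at ht ⊢
    exact ⟨σ t, by simpa using ht, by simp⟩

lemma chainOf_succ (σ : Equiv.Perm (Fin n)) (j : Fin n) :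
    chainOf σ j.succ = Function.update (chainOf σ j.castSucc) (σ j) true := by
  funext a
  by_cases ha : a = σ j
  · subst ha
    simp [chainOf, Nat.lt_succ_iff]
  · rw [Function.update_of_ne ha]
    simp only [chainOf, Fin.val_succ, Fin.coe_castSucc]
    have hne : (σ.symm a : ℕ) ≠ (j : ℕ) := by
      intro h
      apply ha
      have : σ.symm a = j := Fin.ext h
      rw [← this, Equiv.apply_symm_apply]
    exact decide_eq_decide.mpr (by omega)

lemma chainOf_castSucc_self (σ : Equiv.Perm (Fin n)) (j : Fin n) :
    chainOf σ j.castSucc (σ j) = false := by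
  simp [chainOf]


variable (f : (Fin n → Bool) → Bool)

/-- pairs (x, i) where flipping coordinate i changes f and x i = false -/
def S : Finset ((Fin n → Bool) × Fin n) :=
  univ.filter (fun p => (f p.1 ≠ f (Function.update p.1 p.2 (!(p.1 p.2)))) ∧ p.1 p.2 = false)

/-- pairs (σ, j) where the chain of σ alternates at step j -/
def Big : Finset (Equiv.Perm (Fin n) × Fin n) :=
  univ.filter (fun q => f (chainOf q.1 q.2.castSucc) ≠ f (chainOf q.1 q.2.succ))

lemma big_card_eq_sum :
    (Big f).card = ∑ σ : Equiv.Perm (Fin n), altCount f (chainOf σ) := by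
  unfold Big altCount
  rw [Finset.card_filter, Fintype.sum_prod_type]
  exact Finset.sum_congr rfl (fun σ _ => (Finset.card_filter _ _).symm)

lemma big_card_le : (Big f).card ≤ n.factorial * alt f := by
  rw [big_card_eq_sum]
  calc ∑ σ : Equiv.Perm (Fin n), altCount f (chainOf σ)
      ≤ ∑ _σ : Equiv.Perm (Fin n), alt f :=
        Finset.sum_le_sum (fun σ _ => le_alt f (chainOf_strictMono σ))
    _ = n.factorial * alt f := by
        rw [Finset.sum_const, smul_eq_mul]
        congr 1
        rw [Finset.card_univ, Fintype.card_perm, Fintype.card_fin]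

def toPair (q : Equiv.Perm (Fin n) × Fin n) : (Fin n → Bool) × Fin n :=
  (chainOf q.1 q.2.castSucc, q.1 q.2)

lemma toPair_mem_S {q : Equiv.Perm (Fin n) × Fin n} (hq : q ∈ Big f) :
    toPair q ∈ S f := by
  obtain ⟨σ, j⟩ := q
  simp only [Big, mem_filter, mem_univ, true_and] at hq
  simp only [S, toPair, mem_filter, mem_univ, true_and]
  refine ⟨?_, chainOf_castSucc_self σ j⟩
  rw [chainOf_castSucc_self σ j, Bool.not_false, ← chainOf_succ σ j]
  exact hq


def eLow (k : ℕ) (hk : k ≤ n) : Fin k ≃ {t : Fin n // (t : ℕ) < k} where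
  toFun a := ⟨⟨(a : ℕ), lt_of_lt_of_le a.isLt hk⟩, a.isLt⟩
  invFun t := ⟨((t : Fin n) : ℕ), t.2⟩
  left_inv a := rfl
  right_inv t := rfl

def eHigh (k : ℕ) (hk : k < n) : Fin (n - 1 - k) ≃ {t : Fin n // k < (t : ℕ)} where
  toFun a := ⟨⟨k + 1 + (a : ℕ), by have := a.isLt; omega⟩, by simp only [Fin.val_mk]; omega⟩
  invFun t := ⟨((t : Fin n) : ℕ) - (k + 1), by have h1 := t.2; have h2 := (t : Fin n).isLt; omega⟩
  left_inv a := by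
    ext
    simp only []
    omega
  right_inv t := by
    apply Subtype.ext
    apply Fin.ext
    have := t.2
    simp only []
    omega

lemma exists_sigma0 {x : Fin n → Bool} {i : Fin n} (hxi : x i = false) (hklt : wt x < n) :
    ∃ σ0 : Equiv.Perm (Fin n), (∀ t : Fin n, ((t : ℕ) < wt x ↔ x (σ0 t) = true)) ∧
      σ0 ⟨wt x, hklt⟩ = i := by
  classical
  set k := wt x with hk
  have c1 : Fintype.card {t : Fin n // (t : ℕ) < k} = k := by
    rw [Fintype.card_subtype]
    exact card_filter_lt hklt.le
  have c2 : Fintype.card {a : Fin n // x a = true} = k := by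
    rw [Fintype.card_subtype]; rfl
  obtain ⟨e1⟩ := Fintype.card_eq.mp (c1.trans c2.symm)
  set σ1 := e1.extendSubtype with hσ1
  set b := σ1 ⟨k, hklt⟩ with hbdef
  have hb : x b = false := by
    have := e1.extendSubtype_not_mem ⟨k, hklt⟩ (lt_irrefl k)
    rw [← hσ1, ← hbdef] at this
    exact Bool.not_eq_true _ ▸ (by simpa using this)
  have hswap : ∀ c, x (Equiv.swap b i c) = x c := by
    intro c
    rw [Equiv.swap_apply_def]
    split_ifs with h1 h2
    · rw [h1, hxi, hb]
    · rw [h2, hxi, hb]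
    · rfl
  refine ⟨σ1.trans (Equiv.swap b i), fun t => ?_, ?_⟩
  · rw [Equiv.trans_apply, hswap]
    constructor
    · intro ht
      have := e1.extendSubtype_mem t ht
      simpa using this
    · intro ht
      by_contra hlt
      have := e1.extendSubtype_not_mem t hlt
      rw [← hσ1] at this
      exact this ht
  · rw [Equiv.trans_apply, ← hbdef, Equiv.swap_apply_left]

lemma fiber_ge {p : (Fin n → Bool) × Fin n} (hp : p ∈ S f) :
    (wt p.1).factorial * (n - 1 - wt p.1).factorial ≤
      ((Big f).filter (fun q => toPair q = p)).card := by
  classical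
  obtain ⟨x, i⟩ := p
  simp only [S, mem_filter, mem_univ, true_and] at hp
  obtain ⟨hflip, hxi⟩ := hp
  set k := wt x with hkdef
  have hk1 : k ≤ n - 1 := by
    have hsub : univ.filter (fun a => x a = true) ⊆ univ.erase i := by
      intro a ha
      simp only [mem_filter, mem_univ, true_and] at ha
      refine Finset.mem_erase.mpr ⟨?_, mem_univ _⟩
      intro h; rw [h, hxi] at ha; exact Bool.false_ne_true ha
    have := Finset.card_le_card hsub
    rwa [Finset.card_erase_of_mem (mem_univ i), Finset.card_univ, Fintype.card_fin] at this
  have hn : 1 ≤ n := i.pos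
  have hklt : k < n := by omega
  obtain ⟨σ0, hσ0block, hσ0k⟩ := exists_sigma0 hxi hklt
  set jk : Fin n := ⟨k, hklt⟩ with hjk
  set π : Equiv.Perm (Fin k) × Equiv.Perm (Fin (n - 1 - k)) → Equiv.Perm (Fin n) :=
    fun τ => (τ.2.extendDomain (eHigh k hklt)).trans (τ.1.extendDomain (eLow k hklt.le))
    with hπdef
  have hπlow : ∀ τ (t : Fin n), (t : ℕ) < k → ((π τ) t : ℕ) < k := by
    intro τ t ht
    simp only [hπdef, Equiv.trans_apply]
    rw [Equiv.Perm.extendDomain_apply_not_subtype τ.2 (eHigh k hklt) (by omega)]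
    rw [Equiv.Perm.extendDomain_apply_subtype τ.1 (eLow k hklt.le) ht]
    exact ((eLow k hklt.le) _).2
  have hπmid : ∀ τ, (π τ) jk = jk := by
    intro τ
    simp only [hπdef, Equiv.trans_apply]
    rw [Equiv.Perm.extendDomain_apply_not_subtype τ.2 (eHigh k hklt) (by simp [hjk])]
    rw [Equiv.Perm.extendDomain_apply_not_subtype τ.1 (eLow k hklt.le) (by simp [hjk])]
  have hπhigh : ∀ τ (t : Fin n), k < (t : ℕ) → k < ((π τ) t : ℕ) := by
    intro τ t ht
    simp only [hπdef, Equiv.trans_apply]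
    rw [Equiv.Perm.extendDomain_apply_subtype τ.2 (eHigh k hklt) ht]
    have h2 := ((eHigh k hklt) (τ.2 ((eHigh k hklt).symm ⟨t, ht⟩))).2
    rw [Equiv.Perm.extendDomain_apply_not_subtype τ.1 (eLow k hklt.le) (by omega)]
    exact h2
  set m : Equiv.Perm (Fin k) × Equiv.Perm (Fin (n - 1 - k)) → Equiv.Perm (Fin n) × Fin n :=
    fun τ => ((π τ).trans σ0, jk) with hmdef
  have hXeq : ∀ τ, chainOf ((π τ).trans σ0) jk.castSucc = x := by
    intro τ
    funext a
    obtain ⟨t, rfl⟩ : ∃ t, ((π τ).trans σ0) t = a := ⟨((π τ).trans σ0).symm a, by simp⟩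
    show (decide ((((((π τ).trans σ0)).symm (((π τ).trans σ0) t) : Fin n) : ℕ) < ((jk.castSucc : Fin (n+1)) : ℕ))) = x (((π τ).trans σ0) t)
    rw [Equiv.symm_apply_apply]
    have hcs : ((jk.castSucc : Fin (n+1)) : ℕ) = k := rfl
    rw [hcs]
    have happ : (((π τ).trans σ0) t) = σ0 ((π τ) t) := rfl
    rw [happ]
    rcases lt_trichotomy (t : ℕ) k with h | h | h
    · have := (hσ0block ((π τ) t)).mp (hπlow τ t h)
      rw [this, decide_eq_true h]
    · have ht : t = jk := Fin.ext h
      rw [ht, hπmid, hσ0k, hxi]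
      simp [hjk]
    · have hnot : ¬ (((π τ) t : ℕ) < k) := by have := hπhigh τ t h; omega
      have hne : x (σ0 ((π τ) t)) ≠ true := fun hc => hnot ((hσ0block _).mpr hc)
      have hfalse : x (σ0 ((π τ) t)) = false := Bool.eq_false_iff.mpr hne
      rw [hfalse, decide_eq_false (by omega)]
  have hσjk : ∀ τ, (((π τ).trans σ0)) jk = i := by
    intro τ
    show σ0 ((π τ) jk) = i
    rw [hπmid, hσ0k]
  have hmem : ∀ τ, m τ ∈ (Big f).filter (fun q => toPair q = (x, i)) := by
    intro τ
    rw [Finset.mem_filter]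
    constructor
    · simp only [Big, mem_filter, mem_univ, true_and, hmdef]
      rw [chainOf_succ, hσjk τ, hXeq τ]
      rw [hxi, Bool.not_false] at hflip
      exact hflip
    · simp only [toPair, hmdef]
      exact Prod.ext (hXeq τ) (hσjk τ)
  have hinj : Set.InjOn m (univ : Finset (Equiv.Perm (Fin k) × Equiv.Perm (Fin (n - 1 - k)))) := by
    intro τ _ τ' _ heq
    have hπeq : π τ = π τ' := by
      have h1 : (π τ).trans σ0 = (π τ').trans σ0 := congrArg Prod.fst heq
      ext t
      have h3 := congrArg (fun e : Equiv.Perm (Fin n) => σ0.symm (e t)) h1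
      have h4 : (π τ) t = (π τ') t := by simpa using h3
      exact congrArg Fin.val h4
    have h1 : τ.1 = τ'.1 := by
      ext a
      have ha : ((((eLow k hklt.le) a) : Fin n) : ℕ) < k := ((eLow k hklt.le) a).2
      have hcalc : ∀ ρ : Equiv.Perm (Fin k), (ρ.extendDomain (eLow k hklt.le)).trans
          (Equiv.refl _) = ρ.extendDomain (eLow k hklt.le) := fun _ => Equiv.trans_refl _
      have e1 := congrFun (congrArg (fun e : Equiv.Perm (Fin n) => (e : Fin n → Fin n))
        hπeq) (((eLow k hklt.le) a) : Fin n)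
      simp only [hπdef, Equiv.trans_apply] at e1
      rw [Equiv.Perm.extendDomain_apply_not_subtype τ.2 (eHigh k hklt) (by omega),
          Equiv.Perm.extendDomain_apply_not_subtype τ'.2 (eHigh k hklt) (by omega)] at e1
      rw [Equiv.Perm.extendDomain_apply_subtype τ.1 (eLow k hklt.le) ha,
          Equiv.Perm.extendDomain_apply_subtype τ'.1 (eLow k hklt.le) ha] at e1
      have hsymm : (eLow k hklt.le).symm ⟨((eLow k hklt.le) a : Fin n), ha⟩ = a := by
        apply (eLow k hklt.le).injective
        apply Subtype.ext
        simp
      rw [hsymm] at e1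
      have := Subtype.coe_injective e1
      exact congrArg Fin.val ((eLow k hklt.le).injective this)
    have h2 : τ.2 = τ'.2 := by
      ext a
      have ha : k < ((((eHigh k hklt) a) : Fin n) : ℕ) := ((eHigh k hklt) a).2
      have e1 := congrFun (congrArg (fun e : Equiv.Perm (Fin n) => (e : Fin n → Fin n))
        hπeq) (((eHigh k hklt) a) : Fin n)
      simp only [hπdef, Equiv.trans_apply] at e1
      rw [Equiv.Perm.extendDomain_apply_subtype τ.2 (eHigh k hklt) ha,
          Equiv.Perm.extendDomain_apply_subtype τ'.2 (eHigh k hklt) ha] at e1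
      have hsymm : (eHigh k hklt).symm ⟨((eHigh k hklt) a : Fin n), ha⟩ = a := by
        apply (eHigh k hklt).injective
        apply Subtype.ext
        simp
      rw [hsymm] at e1
      rw [Equiv.Perm.extendDomain_apply_not_subtype τ.1 (eLow k hklt.le)
            (by have := ((eHigh k hklt) (τ.2 a)).2; omega),
          Equiv.Perm.extendDomain_apply_not_subtype τ'.1 (eLow k hklt.le)
            (by have := ((eHigh k hklt) (τ'.2 a)).2; omega)] at e1
      have := Subtype.coe_injective e1
      exact congrArg Fin.val ((eHigh k hklt).injective this)
    exact Prod.ext h1 h2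
  have hcard := Finset.card_le_card_of_injOn m (fun τ _ => hmem τ) hinj
  rw [Finset.card_univ, Fintype.card_prod, Fintype.card_perm, Fintype.card_perm,
    Fintype.card_fin, Fintype.card_fin] at hcard
  exact hcard


lemma factorial_middle_le {m k : ℕ} (hk : k ≤ m) :
    (m / 2).factorial * (m - m / 2).factorial ≤ k.factorial * (m - k).factorial := by
  have h1 := Nat.choose_le_middle k m
  have e1 := Nat.choose_mul_factorial_mul_factorial hk
  have e2 := Nat.choose_mul_factorial_mul_factorial (Nat.div_le_self m 2)
  have hpos : 0 < Nat.choose m (m / 2) := Nat.choose_pos (Nat.div_le_self m 2)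
  apply Nat.le_of_mul_le_mul_left _ hpos
  calc Nat.choose m (m / 2) * ((m / 2).factorial * (m - m / 2).factorial)
      = Nat.choose m (m / 2) * (m / 2).factorial * (m - m / 2).factorial := by ring
    _ = m.factorial := e2
    _ = Nat.choose m k * k.factorial * (m - k).factorial := e1.symm
    _ ≤ Nat.choose m (m / 2) * k.factorial * (m - k).factorial := by
        exact Nat.mul_le_mul_right _ (Nat.mul_le_mul_right _ h1)
    _ = Nat.choose m (m / 2) * (k.factorial * (m - k).factorial) := by ring

lemma wt_le_of_mem_S {p : (Fin n → Bool) × Fin n} (hp : p ∈ S f) : wt p.1 ≤ n - 1 := by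
  obtain ⟨x, i⟩ := p
  simp only [S, mem_filter, mem_univ, true_and] at hp
  obtain ⟨-, hxi⟩ := hp
  have hsub : univ.filter (fun a => x a = true) ⊆ univ.erase i := by
    intro a ha
    simp only [mem_filter, mem_univ, true_and] at ha
    refine Finset.mem_erase.mpr ⟨?_, mem_univ _⟩
    intro h; rw [h, hxi] at ha; exact Bool.false_ne_true ha
  have := Finset.card_le_card hsub
  rwa [Finset.card_erase_of_mem (mem_univ i), Finset.card_univ, Fintype.card_fin] at this

lemma main_nat :
    (S f).card * (((n - 1) / 2).factorial * ((n - 1) - (n - 1) / 2).factorial)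
      ≤ n.factorial * alt f := by
  classical
  have h1 : (Big f).card = ∑ p ∈ S f, ((Big f).filter (fun q => toPair q = p)).card :=
    Finset.card_eq_sum_card_fiberwise (fun q hq => toPair_mem_S f hq)
  have hbound : ∀ p ∈ S f, ((n - 1) / 2).factorial * ((n - 1) - (n - 1) / 2).factorial
      ≤ ((Big f).filter (fun q => toPair q = p)).card := fun p hp =>
    le_trans (factorial_middle_le (wt_le_of_mem_S f hp)) (fiber_ge f hp)
  have h2 : (S f).card * (((n - 1) / 2).factorial * ((n - 1) - (n - 1) / 2).factorial)
      ≤ (Big f).card := by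
    rw [h1]
    calc (S f).card * (((n - 1) / 2).factorial * ((n - 1) - (n - 1) / 2).factorial)
        = ∑ _p ∈ S f, (((n - 1) / 2).factorial * ((n - 1) - (n - 1) / 2).factorial) := by
          rw [Finset.sum_const, smul_eq_mul]
      _ ≤ ∑ p ∈ S f, ((Big f).filter (fun q => toPair q = p)).card :=
          Finset.sum_le_sum hbound
  exact h2.trans (big_card_le f)

/-- all flip pairs -/
def T : Finset ((Fin n → Bool) × Fin n) :=
  univ.filter (fun p => f p.1 ≠ f (Function.update p.1 p.2 (!(p.1 p.2))))

lemma update_update (x : Fin n → Bool) (i : Fin n) :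
    Function.update (Function.update x i (!(x i))) i
      (!((Function.update x i (!(x i))) i)) = x := by
  have h : (Function.update x i (!(x i))) i = !(x i) := Function.update_self i _ x
  rw [h, Bool.not_not, Function.update_idem, Function.update_eq_self]

lemma T_card_eq : (T f).card = 2 * (S f).card := by
  classical
  have hS : S f = (T f).filter (fun p => p.1 p.2 = false) := by
    unfold S T
    rw [Finset.filter_filter]
  have hsplit := Finset.card_filter_add_card_filter_not
    (s := T f) (p := fun p => p.1 p.2 = false)
  have hbij : ((T f).filter (fun p => ¬ (p.1 p.2 = false))).card
      = ((T f).filter (fun p => p.1 p.2 = false)).card := by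
    apply Finset.card_bij' (fun p _ => (Function.update p.1 p.2 (!(p.1 p.2)), p.2))
      (fun p _ => (Function.update p.1 p.2 (!(p.1 p.2)), p.2))
    · intro p hp
      apply Prod.ext
      · exact update_update p.1 p.2
      · rfl
    · intro p hp
      apply Prod.ext
      · exact update_update p.1 p.2
      · rfl
    · intro p hp
      simp only [T, Finset.mem_filter, mem_univ, true_and] at hp ⊢
      obtain ⟨hflip, hsign⟩ := hp
      refine ⟨?_, ?_⟩
      · rw [update_update]
        exact fun h => hflip h.symm
      · have : p.1 p.2 = true := Bool.not_eq_false _ ▸ (by simpa using hsign)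
        simp [this]
    · intro p hp
      simp only [T, Finset.mem_filter, mem_univ, true_and] at hp ⊢
      obtain ⟨hflip, hsign⟩ := hp
      refine ⟨?_, ?_⟩
      · rw [update_update]
        exact fun h => hflip h.symm
      · simp [hsign]
  rw [hS]
  omega

lemma totalInfluence_eq : totalInfluence f * 2 ^ n = ((T f).card : ℝ) := by
  classical
  unfold totalInfluence influence
  rw [← Finset.sum_div, div_mul_cancel₀]
  swap
  · positivity
  have hT : (T f).card = ∑ i : Fin n, (Finset.univ.filter (fun x : Fin n → Bool =>
      f x ≠ f (Function.update x i (!(x i))))).card := by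
    unfold T
    rw [Finset.card_filter, Fintype.sum_prod_type, Finset.sum_comm]
    exact Finset.sum_congr rfl (fun i _ => (Finset.card_filter _ _).symm)
  rw [hT]
  push_cast
  rfl


lemma key_sqrt (m : ℕ) :
    (2 * (2 * (m:ℝ) + 1)) * Real.sqrt ((m:ℝ) + 2) ≤ (4 * ((m:ℝ) + 1)) * Real.sqrt ((m:ℝ) + 1) := by
  have e1 : (2 * (2 * (m:ℝ) + 1)) * Real.sqrt ((m:ℝ) + 2)
      = Real.sqrt ((2 * (2 * (m:ℝ) + 1))^2 * ((m:ℝ) + 2)) := by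
    rw [Real.sqrt_mul (by positivity), Real.sqrt_sq (by positivity)]
  have e2 : (4 * ((m:ℝ) + 1)) * Real.sqrt ((m:ℝ) + 1)
      = Real.sqrt ((4 * ((m:ℝ) + 1))^2 * ((m:ℝ) + 1)) := by
    rw [Real.sqrt_mul (by positivity), Real.sqrt_sq (by positivity)]
  rw [e1, e2]
  apply Real.sqrt_le_sqrt
  nlinarith [sq_nonneg ((m:ℝ)), Nat.cast_nonneg (α := ℝ) m]

lemma cb_sqrt (m : ℕ) : (Nat.centralBinom m : ℝ) * Real.sqrt ((m:ℝ) + 1) ≤ 4 ^ m := by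
  induction m with
  | zero => simp [Nat.centralBinom]
  | succ m ih =>
    have hrec := Nat.succ_mul_centralBinom_succ m
    have hrecR : ((m:ℝ) + 1) * (Nat.centralBinom (m+1) : ℝ)
        = 2 * (2 * (m:ℝ) + 1) * (Nat.centralBinom m : ℝ) := by
      exact_mod_cast congrArg (Nat.cast (R := ℝ)) hrec
    have hpos : (0:ℝ) < (m:ℝ) + 1 := by positivity
    rw [← mul_le_mul_iff_right₀ hpos]
    have hcast : ((m + 1 : ℕ) : ℝ) + 1 = (m : ℝ) + 2 := by push_cast; ring
    calc ((m:ℝ) + 1) * ((Nat.centralBinom (m+1) : ℝ) * Real.sqrt (((m+1 : ℕ):ℝ) + 1))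
        = (2 * (2 * (m:ℝ) + 1) * Real.sqrt ((m:ℝ) + 2)) * (Nat.centralBinom m : ℝ) := by
          rw [hcast, ← mul_assoc, hrecR]; ring
      _ ≤ ((4 * ((m:ℝ) + 1)) * Real.sqrt ((m:ℝ) + 1)) * (Nat.centralBinom m : ℝ) :=
          mul_le_mul_of_nonneg_right (key_sqrt m) (by positivity)
      _ = (4 * ((m:ℝ) + 1)) * ((Nat.centralBinom m : ℝ) * Real.sqrt ((m:ℝ) + 1)) := by ring
      _ ≤ (4 * ((m:ℝ) + 1)) * 4 ^ m := by
          apply mul_le_mul_of_nonneg_left ih (by positivity)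
      _ = ((m:ℝ) + 1) * 4 ^ (m+1) := by ring

lemma sqrt_two_mul (a : ℝ) (ha : 0 ≤ a) : Real.sqrt (2 * a) = Real.sqrt 2 * Real.sqrt a :=
  Real.sqrt_mul (by norm_num) a

lemma choose_middle_sqrt (n : ℕ) :
    (Nat.choose n (n / 2) : ℝ) * Real.sqrt ((n:ℝ) + 1) ≤ Real.sqrt 2 * 2 ^ n := by
  rcases Nat.even_or_odd n with ⟨m, hm⟩ | ⟨m, hm⟩
  · subst hm
    have h2 : (m + m) / 2 = m := by omega
    rw [h2]
    have hcb : Nat.choose (m + m) m = Nat.centralBinom m := by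
      rw [Nat.centralBinom]; congr 1; omega
    rw [hcb]
    have hsq : Real.sqrt (((m+m:ℕ):ℝ) + 1) ≤ Real.sqrt 2 * Real.sqrt ((m:ℝ) + 1) := by
      rw [← sqrt_two_mul _ (by positivity)]
      apply Real.sqrt_le_sqrt
      push_cast; ring_nf; nlinarith
    calc (Nat.centralBinom m : ℝ) * Real.sqrt (((m+m:ℕ):ℝ) + 1)
        ≤ (Nat.centralBinom m : ℝ) * (Real.sqrt 2 * Real.sqrt ((m:ℝ) + 1)) :=
          mul_le_mul_of_nonneg_left hsq (by positivity)
      _ = Real.sqrt 2 * ((Nat.centralBinom m : ℝ) * Real.sqrt ((m:ℝ) + 1)) := by ring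
      _ ≤ Real.sqrt 2 * 4 ^ m := mul_le_mul_of_nonneg_left (cb_sqrt m) (Real.sqrt_nonneg 2)
      _ = Real.sqrt 2 * 2 ^ (m + m) := by rw [show (4:ℝ) = 2^2 by norm_num, ← pow_mul]; ring_nf
  · subst hm
    have h2 : (2 * m + 1) / 2 = m := by omega
    rw [h2]
    have hcb : Nat.centralBinom (m + 1) = 2 * Nat.choose (2 * m + 1) m := by
      rw [Nat.centralBinom, show 2 * (m + 1) = (2 * m + 1) + 1 by ring, Nat.choose_succ_succ]
      have hsymm : Nat.choose (2 * m + 1) (m + 1) = Nat.choose (2 * m + 1) m := by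
        have := Nat.choose_symm (show m + 1 ≤ 2 * m + 1 by omega)
        rw [show 2 * m + 1 - (m + 1) = m by omega] at this
        exact this.symm
      rw [hsymm]; ring
    -- (choose (2m+1) m) * sqrt(2m+2) ≤ sqrt 2 * 2^(2m+1)
    have key := cb_sqrt (m + 1)
    rw [hcb] at key
    push_cast at key
    -- key : 2 * choose * sqrt(m+2) ≤ 4^(m+1)
    have hsq : Real.sqrt (((2*m+1:ℕ):ℝ) + 1) ≤ Real.sqrt 2 * Real.sqrt (((m:ℕ):ℝ) + 1 + 1) := by
      rw [← sqrt_two_mul _ (by positivity)]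
      apply Real.sqrt_le_sqrt
      push_cast; nlinarith
    have hnonneg : (0:ℝ) ≤ (Nat.choose (2 * m + 1) m : ℝ) := by positivity
    calc (Nat.choose (2 * m + 1) m : ℝ) * Real.sqrt (((2*m+1:ℕ):ℝ) + 1)
        ≤ (Nat.choose (2 * m + 1) m : ℝ) * (Real.sqrt 2 * Real.sqrt (((m:ℕ):ℝ) + 1 + 1)) :=
          mul_le_mul_of_nonneg_left hsq hnonneg
      _ = Real.sqrt 2 * (((Nat.choose (2 * m + 1) m : ℝ)) * Real.sqrt (((m:ℕ):ℝ) + 1 + 1)) := by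
          ring
      _ ≤ Real.sqrt 2 * (4 ^ (m+1) / 2) := by
          apply mul_le_mul_of_nonneg_left _ (Real.sqrt_nonneg 2)
          rw [le_div_iff₀ (by norm_num)]
          calc (Nat.choose (2 * m + 1) m : ℝ) * Real.sqrt (((m:ℕ):ℝ) + 1 + 1) * 2
              = 2 * (Nat.choose (2 * m + 1) m : ℝ) * Real.sqrt ((m:ℝ) + 1 + 1) := by push_cast; ring
            _ ≤ 4 ^ (m+1) := by
                have : ((m:ℝ) + 1 + 1) = ((m+1:ℕ):ℝ) + 1 := by push_cast; ring
                rw [this]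
                convert key using 2 <;> push_cast <;> ring
      _ = Real.sqrt 2 * 2 ^ (2 * m + 1) := by
          congr 1
          rw [show (4:ℝ) = 2^2 by norm_num, ← pow_mul]
          rw [show 2 * (m + 1) = (2 * m + 1) + 1 by ring, pow_succ]
          ring

end Stmt5Aux

/-- For every `α ∈ (0,1]` there are `c > 0` and `N` such that for all `n ≥ N`,
every `f : {0,1}^n → {0,1}` with `Inf[f] ≥ α n` has `a(f) ≥ c √n`. -/
theorem stmt5 (α : ℝ) (hα0 : 0 < α) (hα1 : α ≤ 1) :
    ∃ (c : ℝ) (N : ℕ), 0 < c ∧ ∀ n : ℕ, N ≤ n → ∀ f : (Fin n → Bool) → Bool,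
      α * n ≤ totalInfluence f → c * Real.sqrt n ≤ (alt f : ℝ) := by
  classical
  refine ⟨α / 4, 1, by positivity, ?_⟩
  intro n hn f hinf
  set M := (n - 1) / 2 with hM
  have hMle : M ≤ n - 1 := Nat.div_le_self _ _
  have hfacpos : 0 < M.factorial * ((n - 1) - M).factorial :=
    Nat.mul_pos (Nat.factorial_pos _) (Nat.factorial_pos _)
  have hmain := Stmt5Aux.main_nat f
  have hchoose := Nat.choose_mul_factorial_mul_factorial hMle
  have hnpos : 0 < n := hn
  have hnfact : n.factorial
      = n * ((n - 1).choose M * (M.factorial * ((n - 1) - M).factorial)) := by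
    rw [← Nat.mul_factorial_pred hnpos.ne']
    congr 1
    rw [← hchoose, mul_assoc]
  have hS_le : (Stmt5Aux.S f).card ≤ n * ((n - 1).choose M) * alt f := by
    apply Nat.le_of_mul_le_mul_right _ hfacpos
    calc (Stmt5Aux.S f).card * (M.factorial * ((n - 1) - M).factorial)
        ≤ n.factorial * alt f := hmain
      _ = n * ((n - 1).choose M) * alt f * (M.factorial * ((n - 1) - M).factorial) := by
          rw [hnfact]; ring
  have hcast : ((Stmt5Aux.S f).card : ℝ) ≤ (n : ℝ) * ((n - 1).choose M : ℝ) * (alt f : ℝ) := by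
    exact_mod_cast hS_le
  have hSval : totalInfluence f * 2 ^ n = 2 * ((Stmt5Aux.S f).card : ℝ) := by
    rw [Stmt5Aux.totalInfluence_eq f, Stmt5Aux.T_card_eq f]
    push_cast; ring
  have hpow : (0 : ℝ) < 2 ^ n := by positivity
  have h3 : α * (n : ℝ) * 2 ^ n ≤ 2 * ((n : ℝ) * ((n - 1).choose M : ℝ) * (alt f : ℝ)) := by
    have h1 : α * (n : ℝ) * 2 ^ n ≤ totalInfluence f * 2 ^ n :=
      mul_le_mul_of_nonneg_right hinf hpow.le
    rw [hSval] at h1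
    linarith
  have hnR : (0 : ℝ) < (n : ℝ) := by exact_mod_cast hnpos
  have h4 : α * 2 ^ n ≤ 2 * ((n - 1).choose M : ℝ) * (alt f : ℝ) := by
    apply le_of_mul_le_mul_left _ hnR
    calc (n : ℝ) * (α * 2 ^ n) = α * (n : ℝ) * 2 ^ n := by ring
      _ ≤ 2 * ((n : ℝ) * ((n - 1).choose M : ℝ) * (alt f : ℝ)) := h3
      _ = (n : ℝ) * (2 * ((n - 1).choose M : ℝ) * (alt f : ℝ)) := by ring
  have hCb : ((n - 1).choose M : ℝ) ≤ (n.choose (n / 2) : ℝ) := by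
    exact_mod_cast (Nat.choose_le_choose M (Nat.sub_le n 1)).trans (Nat.choose_le_middle M n)
  have hmid := Stmt5Aux.choose_middle_sqrt n
  have haltnn : (0 : ℝ) ≤ (alt f : ℝ) := Nat.cast_nonneg _
  have hsq1 : (0 : ℝ) ≤ Real.sqrt ((n : ℝ) + 1) := Real.sqrt_nonneg _
  -- multiply h4 by sqrt(n+1) and use hmid
  have h5 : α * Real.sqrt ((n : ℝ) + 1) * 2 ^ n
      ≤ 2 * (Real.sqrt 2 * 2 ^ n) * (alt f : ℝ) := by
    calc α * Real.sqrt ((n : ℝ) + 1) * 2 ^ n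
        = (α * 2 ^ n) * Real.sqrt ((n : ℝ) + 1) := by ring
      _ ≤ (2 * ((n - 1).choose M : ℝ) * (alt f : ℝ)) * Real.sqrt ((n : ℝ) + 1) :=
          mul_le_mul_of_nonneg_right h4 hsq1
      _ = 2 * ((alt f : ℝ)) * (((n - 1).choose M : ℝ) * Real.sqrt ((n : ℝ) + 1)) := by ring
      _ ≤ 2 * ((alt f : ℝ)) * ((n.choose (n / 2) : ℝ) * Real.sqrt ((n : ℝ) + 1)) := by
          apply mul_le_mul_of_nonneg_left (mul_le_mul_of_nonneg_right hCb hsq1)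
          positivity
      _ ≤ 2 * ((alt f : ℝ)) * (Real.sqrt 2 * 2 ^ n) :=
          mul_le_mul_of_nonneg_left hmid (by positivity)
      _ = 2 * (Real.sqrt 2 * 2 ^ n) * (alt f : ℝ) := by ring
  have h6 : α * Real.sqrt ((n : ℝ) + 1) ≤ 2 * Real.sqrt 2 * (alt f : ℝ) := by
    apply le_of_mul_le_mul_right _ hpow
    calc α * Real.sqrt ((n : ℝ) + 1) * 2 ^ n
        ≤ 2 * (Real.sqrt 2 * 2 ^ n) * (alt f : ℝ) := h5
      _ = 2 * Real.sqrt 2 * (alt f : ℝ) * 2 ^ n := by ring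
  have hs2 : Real.sqrt 2 ≤ 2 := by
    nlinarith [Real.sq_sqrt (show (0:ℝ) ≤ 2 by norm_num), Real.sqrt_nonneg 2]
  have hsmono : Real.sqrt (n : ℝ) ≤ Real.sqrt ((n : ℝ) + 1) :=
    Real.sqrt_le_sqrt (by linarith)
  have hsnn : (0 : ℝ) ≤ Real.sqrt (n : ℝ) := Real.sqrt_nonneg _
  nlinarith [mul_le_mul_of_nonneg_left hsmono hα0.le,
    mul_le_mul_of_nonneg_right hs2 haltnn]
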